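/- For a continuously differentiable vector field f on ℝ^N whose attractor 𝒜 consists of the points of a locally attractive hyperbolic solution x̃, the return time T_R(𝒜, x_p) = (1/dist(x_p,𝒜)) ∫₀^∞ dist(φ(t, x_p), 𝒜) dt is finite for every x_p in the basin of attraction ℬ(𝒜) \ 𝒜. -/
import Mathlib


open Metric Set Filter MeasureTheory

/-- for a C¹ vector field whose attractor is the set of points of a
locally attractive hyperbolic solution, the return time is finite (the integral
of the distance to the attractor along any trajectory starting in the basin
converges). -/
theorem return_time_finite
    {N : ℕ} (f : EuclideanSpace ℝ (Fin N) → EuclideanSpace ℝ (Fin N))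
    (hf : ContDiff ℝ 1 f)
    (φ : ℝ → EuclideanSpace ℝ (Fin N) → EuclideanSpace ℝ (Fin N))
    (hφcont : Continuous fun p : ℝ × EuclideanSpace ℝ (Fin N) => φ p.1 p.2)
    (hφzero : ∀ x, φ 0 x = x)
    (hφadd : ∀ s t x, φ (s + t) x = φ s (φ t x))
    (hφode : ∀ x t, HasDerivAt (fun s => φ s x) (f (φ t x)) t)
    (ξ : ℝ → EuclideanSpace ℝ (Fin N))
    (hξsol : ∀ t, HasDerivAt ξ (f (ξ t)) t)
    (𝒜 : Set (EuclideanSpace ℝ (Fin N)))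
    (h𝒜 : 𝒜 = Set.range ξ)
    (h𝒜comp : IsCompact 𝒜)
    -- first approximation property of the locally attractive hyperbolic solution ξ :
    (K β δ : ℝ) (hK : 1 ≤ K) (hβ : 0 < β) (hδ : 0 < δ)
    (hhyp : ∀ s : ℝ, ∀ xb, dist xb (ξ s) ≤ δ →
      ∀ t ≥ s, dist (φ (t - s) xb) (ξ t) ≤ K * Real.exp (-β * (t - s))) :
    ∀ x_p ∈ {x₀ | (omegaLimit atTop φ {x₀}).Nonempty ∧ omegaLimit atTop φ {x₀} ⊆ 𝒜} \ 𝒜,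
      IntegrableOn (fun t => infDist (φ t x_p) 𝒜) (Ici (0:ℝ)) := by
  intro x_p hx_p
  obtain ⟨⟨⟨y, hy⟩, hsub⟩, -⟩ := hx_p
  -- y ∈ 𝒜 = range ξ
  have hy𝒜 : y ∈ 𝒜 := hsub hy
  obtain ⟨s₀, rfl⟩ : ∃ s₀, ξ s₀ = y := by rwa [h𝒜, Set.mem_range] at hy𝒜
  -- find t₀ ≥ 0 with dist (φ t₀ x_p) (ξ s₀) ≤ δ
  have hfreq := (mem_omegaLimit_iff_frequently (f := atTop) (ϕ := φ)
    (s := ({x_p} : Set _)) (ξ s₀)).mp hy (Metric.ball (ξ s₀) δ) (Metric.ball_mem_nhds _ hδ)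
  obtain ⟨t₀, hball, ht₀0⟩ := (hfreq.and_eventually (eventually_ge_atTop (0:ℝ))).exists
  obtain ⟨z, hz1, hz2⟩ := hball
  rw [Set.mem_singleton_iff] at hz1
  rw [hz1] at hz2
  have hclose : dist (φ t₀ x_p) (ξ s₀) ≤ δ := le_of_lt hz2
  -- continuity of the integrand
  have hgcont : Continuous fun t => infDist (φ t x_p) 𝒜 := by
    exact (continuous_infDist_pt 𝒜).comp
      (hφcont.comp (continuous_id.prodMk continuous_const))
  -- exponential bound for t ≥ t₀
  have hbound : ∀ t ≥ t₀, infDist (φ t x_p) 𝒜 ≤ K * Real.exp (-β * (t - t₀)) := by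
    intro t ht
    have h1 := hhyp s₀ (φ t₀ x_p) hclose (t - t₀ + s₀) (by linarith)
    have h2 : t - t₀ + s₀ - s₀ = t - t₀ := by ring
    rw [h2] at h1
    have h3 : φ (t - t₀) (φ t₀ x_p) = φ t x_p := by
      rw [← hφadd]; ring_nf
    rw [h3] at h1
    have hmem : ξ (t - t₀ + s₀) ∈ 𝒜 := by rw [h𝒜]; exact Set.mem_range_self _
    calc infDist (φ t x_p) 𝒜 ≤ dist (φ t x_p) (ξ (t - t₀ + s₀)) := infDist_le_dist_of_mem hmem
      _ ≤ K * Real.exp (-β * (t - t₀)) := h1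
  -- split [0,∞) = [0,t₀] ∪ [t₀,∞)
  have hIcc : IntegrableOn (fun t => infDist (φ t x_p) 𝒜) (Icc 0 t₀) :=
    hgcont.continuousOn.integrableOn_Icc
  have hexp : IntegrableOn (fun t => K * Real.exp (β * t₀) * Real.exp (-β * t)) (Ioi t₀) :=
    (exp_neg_integrableOn_Ioi t₀ hβ).const_mul _
  have hIci : IntegrableOn (fun t => infDist (φ t x_p) 𝒜) (Ioi t₀) := by
    refine Integrable.mono' hexp (hgcont.aestronglyMeasurable.restrict) ?_
    refine (ae_restrict_iff' measurableSet_Ioi).mpr (ae_of_all _ fun t ht => ?_)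
    have ht' : t₀ ≤ t := le_of_lt ht
    have h0 : 0 ≤ infDist (φ t x_p) 𝒜 := infDist_nonneg
    rw [Real.norm_of_nonneg h0]
    calc infDist (φ t x_p) 𝒜 ≤ K * Real.exp (-β * (t - t₀)) := hbound t ht'
      _ = K * Real.exp (β * t₀) * Real.exp (-β * t) := by
          rw [mul_assoc, ← Real.exp_add]; ring_nf
  have := hIcc.union hIci
  refine this.mono_set fun t ht => ?_
  rcases le_or_gt t t₀ with h | h
  · exact Or.inl ⟨ht, h⟩
  · exact Or.inr h
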